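/- Let D be a category with pullbacks and f : X → Y a morphism in D. In the bicategory of spans in D, the span (Y ← X → X) with left leg f and right leg the identity is right adjoint to the span (X ← X → Y) with left leg the identity and right leg f: there exist unit and counit 2-morphisms (morphisms of spans) given by f : X → Y over Y × Y and the diagonal Δ_f : X → X ×_Y X over X × X, satisfying the triangle identities. -/

import Mathlib

open CategoryTheory Limits

universe v u

variable {D : Type u} [Category.{v} D] [HasPullbacks D]

/-- A span in a category `D` from `X` to `Y`. -/
structure SpanC (X Y : D) where
  apex : D
  l : apex ⟶ X
  r : apex ⟶ Y

namespace SpanC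

/-- Composition of spans, by pullback. -/
noncomputable def comp {X Y Z : D} (S : SpanC X Y) (T : SpanC Y Z) : SpanC X Z where
  apex := pullback S.r T.l
  l := pullback.fst S.r T.l ≫ S.l
  r := pullback.snd S.r T.l ≫ T.r

/-- The identity span. -/
def id (X : D) : SpanC X X := ⟨X, 𝟙 X, 𝟙 X⟩

variable {X Y : D}

/-- The "forward" span `X ← X → Y` associated with a morphism `f : X ⟶ Y`. -/
def fwd (f : X ⟶ Y) : SpanC X Y := ⟨X, 𝟙 X, f⟩

/-- The "backward" span `Y ← X → X` associated with a morphism `f : X ⟶ Y`. -/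
def bwd (f : X ⟶ Y) : SpanC Y X := ⟨X, f, 𝟙 X⟩

/-- The unit 2-cell of the adjunction `fwd f ⊣ bwd f`: the diagonal `Δ_f : X ⟶ X ×_Y X`. -/
noncomputable def unit (f : X ⟶ Y) : X ⟶ (comp (fwd f) (bwd f)).apex :=
  pullback.lift (𝟙 X) (𝟙 X) rfl

/-- The counit 2-cell of the adjunction `fwd f ⊣ bwd f`, given by `f : X ⟶ Y`. -/
noncomputable def counit (f : X ⟶ Y) : (comp (bwd f) (fwd f)).apex ⟶ Y :=
  pullback.fst (bwd f).r (fwd f).l ≫ f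

/-- Inverse left unitor for `fwd f`. -/
noncomputable def m₁ (f : X ⟶ Y) : X ⟶ (comp (SpanC.id X) (fwd f)).apex :=
  pullback.lift (𝟙 X) (𝟙 X) (by simp [SpanC.id, fwd])

/-- Whiskering `unit f ▷ fwd f`. -/
noncomputable def m₂ (f : X ⟶ Y) :
    (comp (SpanC.id X) (fwd f)).apex ⟶ (comp (comp (fwd f) (bwd f)) (fwd f)).apex :=
  pullback.lift (pullback.fst (SpanC.id X).r (fwd f).l ≫ unit f)
    (pullback.snd (SpanC.id X).r (fwd f).l)
    (by
      have h : pullback.fst (𝟙 X) (𝟙 X) = pullback.snd (𝟙 X) (𝟙 X) := by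
        simpa using pullback.condition (f := 𝟙 X) (g := 𝟙 X)
      simp [SpanC.unit, SpanC.comp, SpanC.id, fwd, bwd, h]
      erw [pullback.lift_snd, Category.comp_id])

/-- The associator `(fwd f ≫ bwd f) ≫ fwd f ⟶ fwd f ≫ (bwd f ≫ fwd f)`. -/
noncomputable def m₃ (f : X ⟶ Y) :
    (comp (comp (fwd f) (bwd f)) (fwd f)).apex ⟶
      (comp (fwd f) (comp (bwd f) (fwd f))).apex :=
  pullback.lift
    (pullback.fst (comp (fwd f) (bwd f)).r (fwd f).l ≫ pullback.fst (fwd f).r (bwd f).l)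
    (pullback.lift
      (pullback.fst (comp (fwd f) (bwd f)).r (fwd f).l ≫ pullback.snd (fwd f).r (bwd f).l)
      (pullback.snd (comp (fwd f) (bwd f)).r (fwd f).l)
      (by
        have h := pullback.condition (f := (comp (fwd f) (bwd f)).r) (g := (fwd f).l)
        simp [SpanC.comp, fwd, bwd] at h ⊢
        simpa using h))
    (by
      have h := pullback.condition (f := (fwd f).r) (g := (bwd f).l)
      simp [SpanC.comp, fwd, bwd] at h ⊢
      erw [pullback.lift_fst_assoc]
      simp [h])

/-- Whiskering `fwd f ◁ counit f`. -/
noncomputable def m₄ (f : X ⟶ Y) :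
    (comp (fwd f) (comp (bwd f) (fwd f))).apex ⟶ (comp (fwd f) (SpanC.id Y)).apex :=
  pullback.lift (pullback.fst (fwd f).r (comp (bwd f) (fwd f)).l)
    (pullback.snd (fwd f).r (comp (bwd f) (fwd f)).l ≫ counit f)
    (by
      have h := pullback.condition (f := (fwd f).r) (g := (comp (bwd f) (fwd f)).l)
      simp [SpanC.comp, SpanC.counit, SpanC.id, fwd, bwd] at h ⊢
      simp [h])

/-- Right unitor for `fwd f`. -/
noncomputable def m₅ (f : X ⟶ Y) : (comp (fwd f) (SpanC.id Y)).apex ⟶ X :=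
  pullback.fst (fwd f).r (SpanC.id Y).l

/-- Inverse right unitor for `bwd f`. -/
noncomputable def n₁ (f : X ⟶ Y) : X ⟶ (comp (bwd f) (SpanC.id X)).apex :=
  pullback.lift (𝟙 X) (𝟙 X) (by simp [SpanC.id, bwd])

/-- Whiskering `bwd f ◁ unit f`. -/
noncomputable def n₂ (f : X ⟶ Y) :
    (comp (bwd f) (SpanC.id X)).apex ⟶ (comp (bwd f) (comp (fwd f) (bwd f))).apex :=
  pullback.lift (pullback.fst (bwd f).r (SpanC.id X).l)
    (pullback.snd (bwd f).r (SpanC.id X).l ≫ unit f)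
    (by
      have h : pullback.fst (𝟙 X) (𝟙 X) = pullback.snd (𝟙 X) (𝟙 X) := by
        simpa using pullback.condition (f := 𝟙 X) (g := 𝟙 X)
      simp [SpanC.unit, SpanC.comp, SpanC.id, fwd, bwd, h]
      erw [pullback.lift_fst, Category.comp_id])

/-- The inverse associator `bwd f ≫ (fwd f ≫ bwd f) ⟶ (bwd f ≫ fwd f) ≫ bwd f`. -/
noncomputable def n₃ (f : X ⟶ Y) :
    (comp (bwd f) (comp (fwd f) (bwd f))).apex ⟶
      (comp (comp (bwd f) (fwd f)) (bwd f)).apex :=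
  pullback.lift
    (pullback.lift (pullback.fst (bwd f).r (comp (fwd f) (bwd f)).l)
      (pullback.snd (bwd f).r (comp (fwd f) (bwd f)).l ≫ pullback.fst (fwd f).r (bwd f).l)
      (by
        have h := pullback.condition (f := (bwd f).r) (g := (comp (fwd f) (bwd f)).l)
        simp [SpanC.comp, fwd, bwd] at h ⊢
        simpa using h))
    (pullback.snd (bwd f).r (comp (fwd f) (bwd f)).l ≫ pullback.snd (fwd f).r (bwd f).l)
    (by
      have h := pullback.condition (f := (fwd f).r) (g := (bwd f).l)
      simp [SpanC.comp, fwd, bwd] at h ⊢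
      erw [pullback.lift_snd_assoc]
      simp [h])

/-- Whiskering `counit f ▷ bwd f`. -/
noncomputable def n₄ (f : X ⟶ Y) :
    (comp (comp (bwd f) (fwd f)) (bwd f)).apex ⟶ (comp (SpanC.id Y) (bwd f)).apex :=
  pullback.lift (pullback.fst (comp (bwd f) (fwd f)).r (bwd f).l ≫ counit f)
    (pullback.snd (comp (bwd f) (fwd f)).r (bwd f).l)
    (by
      have h := pullback.condition (f := (comp (bwd f) (fwd f)).r) (g := (bwd f).l)
      have h' : pullback.fst (𝟙 X) (𝟙 X) = pullback.snd (𝟙 X) (𝟙 X) := by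
        simpa using pullback.condition (f := 𝟙 X) (g := 𝟙 X)
      simp [SpanC.comp, SpanC.counit, SpanC.id, fwd, bwd, h'] at h ⊢
      simp [h, h'])

/-- Left unitor for `bwd f`. -/
noncomputable def n₅ (f : X ⟶ Y) : (comp (SpanC.id Y) (bwd f)).apex ⟶ X :=
  pullback.snd (SpanC.id Y).r (bwd f).l

end SpanC

open SpanC

/-- In the bicategory of spans in a category with pullbacks, the span `Y ← X → X` (legs `f`,
`id`) is right adjoint to the span `X ← X → Y` (legs `id`, `f`): the unit (the diagonal
`Δ_f : X ⟶ X ×_Y X`) and the counit (given by `f : X ⟶ Y`) are 2-cells of spans, and they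
satisfy the two triangle identities, expressed via the canonical structural 2-cells
(unitors, associators and whiskerings) between the relevant composite spans. -/
theorem spanC_fwd_adj_bwd {X Y : D} (f : X ⟶ Y) :
    (unit f ≫ (comp (fwd f) (bwd f)).l = (SpanC.id X).l ∧
     unit f ≫ (comp (fwd f) (bwd f)).r = (SpanC.id X).r) ∧
    (counit f ≫ (SpanC.id Y).l = (comp (bwd f) (fwd f)).l ∧
     counit f ≫ (SpanC.id Y).r = (comp (bwd f) (fwd f)).r) ∧
    m₁ f ≫ m₂ f ≫ m₃ f ≫ m₄ f ≫ m₅ f = 𝟙 X ∧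
    n₁ f ≫ n₂ f ≫ n₃ f ≫ n₄ f ≫ n₅ f = 𝟙 X := by
  refine ⟨⟨?_, ?_⟩, ⟨?_, ?_⟩, ?_, ?_⟩
  · simp [SpanC.unit, SpanC.comp, SpanC.id, fwd, bwd]
    erw [pullback.lift_fst]
  · simp [SpanC.unit, SpanC.comp, SpanC.id, fwd, bwd]
    erw [pullback.lift_snd]
  · simp [SpanC.counit, SpanC.comp, SpanC.id, fwd, bwd]
  · have h : pullback.fst (𝟙 X) (𝟙 X) = pullback.snd (𝟙 X) (𝟙 X) := by
      simpa using pullback.condition (f := 𝟙 X) (g := 𝟙 X)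
    simp [SpanC.counit, SpanC.comp, SpanC.id, fwd, bwd, h]
  · simp only [m₁, m₂, m₃, m₄, m₅, SpanC.unit, Category.assoc]
    erw [pullback.lift_fst, pullback.lift_fst, pullback.lift_fst_assoc]
    erw [Category.assoc, pullback.lift_fst, Category.comp_id, pullback.lift_fst]
  · simp only [n₁, n₂, n₃, n₄, n₅, SpanC.unit, Category.assoc]
    erw [pullback.lift_snd, pullback.lift_snd, pullback.lift_snd_assoc]
    erw [Category.assoc, pullback.lift_snd, Category.comp_id, pullback.lift_snd]
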